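/- For every order ω on the Pascal-Bratteli diagram and every p ∈ (0,1), the set of ω-minimal infinite paths and the set of ω-maximal infinite paths both have ν_p-measure zero. -/

import Mathlib

open MeasureTheory
open scoped ENNReal

/-- `S x n` is the number of `1`s (i.e. `true`s) among the first `n` coordinates of `x`. -/
def S (x : ℕ → Bool) (n : ℕ) : ℕ := ∑ k ∈ Finset.range n, if x k then 1 else 0

/-- The vertex of level `n` visited by the path `x`. -/
def vtx (x : ℕ → Bool) (n : ℕ) : ℕ × ℕ := (S x n, n - S x n)

/-- `ν` is the Bernoulli product measure on `{0,1}^ℕ` with parameter `p`. -/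
def IsBernoulli (p : ℝ) (ν : Measure (ℕ → Bool)) : Prop :=
  ∀ (n : ℕ) (w : ℕ → Bool),
    ν {x | ∀ k < n, x k = w k} =
      ENNReal.ofReal (p ^ (S w n) * (1 - p) ^ (n - S w n))

/-- The path `x` is minimal for the order `ω`. -/
def IsMinPath (ω : ℕ × ℕ → Bool) (x : ℕ → Bool) : Prop :=
  ∀ n : ℕ, S x (n + 1) = 0 ∨ (n + 1) - S x (n + 1) = 0 ∨ x n = ω (vtx x (n + 1))

/-- The path `x` is maximal for the order `ω`. -/
def IsMaxPath (ω : ℕ × ℕ → Bool) (x : ℕ → Bool) : Prop :=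
  ∀ n : ℕ, S x (n + 1) = 0 ∨ (n + 1) - S x (n + 1) = 0 ∨ x n = !ω (vtx x (n + 1))

lemma S_succ (x : ℕ → Bool) (n : ℕ) :
    S x (n + 1) = S x n + (if x n then 1 else 0) :=
  Finset.sum_range_succ _ n

lemma S_le (x : ℕ → Bool) (n : ℕ) : S x n ≤ n := by
  induction n with
  | zero => simp [S]
  | succ n ih => rw [S_succ]; split <;> omega

lemma min_eq (ω : ℕ × ℕ → Bool) (n : ℕ) :
    ∀ x y, IsMinPath ω x → IsMinPath ω y → S x n = S y n →
      ∀ k, k < n → x k = y k := by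
  induction n with
  | zero => intro x y _ _ _ k hk; omega
  | succ n ih =>
    intro x y hx hy hS k hk
    have ex := S_succ x n
    have ey := S_succ y n
    have hkey : x n = y n ∧ S x n = S y n := by
      cases hxn : x n <;> cases hyn : y n <;>
        simp only [hxn, hyn, if_true, if_false, Bool.false_eq_true] at ex ey
      · exact ⟨rfl, by omega⟩
      · -- x n = false, y n = true
        exfalso
        rcases hy n with a | b | c
        · omega
        · have := S_le x n; omega
        · rcases hx n with a' | b' | c'
          · have := S_le y n; omega
          · have := S_le y n; have := S_le x n; omega
          · have hv : vtx x (n+1) = vtx y (n+1) := by simp [vtx, hS]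
            rw [hv] at c'; rw [c'] at hxn; rw [c] at hyn; rw [hxn] at hyn; simp at hyn
      · -- x n = true, y n = false
        exfalso
        rcases hx n with a | b | c
        · omega
        · have := S_le y n; omega
        · rcases hy n with a' | b' | c'
          · have := S_le x n; omega
          · have := S_le y n; have := S_le x n; omega
          · have hv : vtx x (n+1) = vtx y (n+1) := by simp [vtx, hS]
            rw [hv] at c; rw [c] at hxn; rw [c'] at hyn; rw [hxn] at hyn; simp at hyn
      · exact ⟨rfl, by omega⟩
    rcases Nat.lt_succ_iff_lt_or_eq.1 hk with h | h
    · exact ih x y hx hy hkey.2 k h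
    · rw [h]; exact hkey.1

lemma min_null (ω : ℕ × ℕ → Bool) (p : ℝ) (hp : p ∈ Set.Ioo (0 : ℝ) 1)
    (ν : Measure (ℕ → Bool)) (hν : IsBernoulli p ν) :
    ν {x : ℕ → Bool | IsMinPath ω x} = 0 := by
  obtain ⟨hp0, hp1⟩ := hp
  set r : ℝ := max p (1 - p) with hr
  have hr0 : 0 ≤ r := le_trans hp0.le (le_max_left _ _)
  have hr1 : r < 1 := max_lt hp1 (by linarith)
  have key : ∀ n : ℕ, ν {x : ℕ → Bool | IsMinPath ω x} ≤
      ((n : ℝ≥0∞) + 1) * ENNReal.ofReal (r ^ n) := by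
    intro n
    classical
    set C : ℕ → Set (ℕ → Bool) := fun s =>
      if h : ∃ z, IsMinPath ω z ∧ S z n = s then {x | ∀ k < n, x k = h.choose k}
      else ∅ with hC
    have hcov : {x : ℕ → Bool | IsMinPath ω x} ⊆ ⋃ s ∈ Finset.range (n + 1), C s := by
      intro x hx
      refine Set.mem_biUnion (Finset.mem_range.2 (Nat.lt_succ_of_le (S_le x n))) ?_
      have h : ∃ z, IsMinPath ω z ∧ S z n = S x n := ⟨x, hx, rfl⟩
      rw [hC]; simp only [dif_pos h]
      intro k hk
      exact min_eq ω n x h.choose hx h.choose_spec.1 h.choose_spec.2.symm k hk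
    have hbound : ∀ s ∈ Finset.range (n + 1), ν (C s) ≤ ENNReal.ofReal (r ^ n) := by
      intro s hs
      rw [hC]
      dsimp only
      split
      · next h =>
        rw [hν n h.choose]
        apply ENNReal.ofReal_le_ofReal
        have h1 : p ^ S h.choose n ≤ r ^ S h.choose n :=
          pow_le_pow_left₀ hp0.le (le_max_left _ _) _
        have h2 : (1 - p) ^ (n - S h.choose n) ≤ r ^ (n - S h.choose n) :=
          pow_le_pow_left₀ (by linarith) (le_max_right _ _) _
        calc p ^ S h.choose n * (1 - p) ^ (n - S h.choose n)
            ≤ r ^ S h.choose n * r ^ (n - S h.choose n) :=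
              mul_le_mul h1 h2 (pow_nonneg (by linarith) _) (pow_nonneg hr0 _)
          _ = r ^ n := by rw [← pow_add, Nat.add_sub_cancel' (S_le h.choose n)]
      · simp
    calc ν {x : ℕ → Bool | IsMinPath ω x}
        ≤ ν (⋃ s ∈ Finset.range (n + 1), C s) := measure_mono hcov
      _ ≤ ∑ s ∈ Finset.range (n + 1), ν (C s) := measure_biUnion_finset_le _ _
      _ ≤ ∑ _s ∈ Finset.range (n + 1), ENNReal.ofReal (r ^ n) := Finset.sum_le_sum hbound
      _ = ((n : ℝ≥0∞) + 1) * ENNReal.ofReal (r ^ n) := by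
          simp [Finset.sum_const, nsmul_eq_mul]
  have hlim : Filter.Tendsto (fun n : ℕ => ((n : ℝ≥0∞) + 1) * ENNReal.ofReal (r ^ n))
      Filter.atTop (nhds 0) := by
    have hre : Filter.Tendsto (fun n : ℕ => ((n : ℝ) + 1) * r ^ n)
        Filter.atTop (nhds 0) := by
      have h1 := tendsto_self_mul_const_pow_of_lt_one hr0 hr1
      have h2 := tendsto_pow_atTop_nhds_zero_of_lt_one hr0 hr1
      have := h1.add h2
      simpa [add_mul] using this
    have := ENNReal.tendsto_ofReal hre
    simp only [ENNReal.ofReal_zero] at this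
    convert this using 2 with n
    rw [ENNReal.ofReal_mul (by positivity)]
    congr 1
    rw [ENNReal.ofReal_add (by positivity) zero_le_one, ENNReal.ofReal_natCast,
      ENNReal.ofReal_one]
  have := ge_of_tendsto' hlim key
  exact le_antisymm this zero_le

/-- for every order `ω` on the Pascal-Bratteli diagram and every `p ∈ (0,1)`,
the sets of minimal and maximal infinite paths are `ν_p`-null. -/
theorem pascal_min_max_null (ω : ℕ × ℕ → Bool) (p : ℝ) (hp : p ∈ Set.Ioo (0 : ℝ) 1)
    (ν : Measure (ℕ → Bool)) (hν : IsBernoulli p ν) :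
    ν {x : ℕ → Bool | IsMinPath ω x} = 0 ∧ ν {x : ℕ → Bool | IsMaxPath ω x} = 0 := by
  refine ⟨min_null ω p hp ν hν, ?_⟩
  have : {x : ℕ → Bool | IsMaxPath ω x} = {x : ℕ → Bool | IsMinPath (fun v => !ω v) x} := rfl
  rw [this]
  exact min_null (fun v => !ω v) p hp ν hν
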